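/- For every strict partition λ of n, the Schur P-function satisfies P_λ(X) = Σ_{S ∈ ShSYT^±(λ)} F_{Des(S)}(X), where the sum is over all signed standard shifted tableaux of shape λ with no signed entries on the main diagonal. -/

import Mathlib

open scoped Classical

noncomputable section

/-! ### Formal power series in variables `x_0, x_1, x_2, …` over `ℚ`,
represented by their coefficient functions. -/

abbrev QS : Type := (ℕ →₀ ℕ) → ℚ

/-- Gessel's fundamental quasisymmetric function `F_D` of degree `n`:
the coefficient of a monomial `e` is `1` exactly if the unique weakly increasing
sequence of variables with content `e` satisfies the descent condition
`i_j = i_{j+1} → j ∉ D` (positions `j = 1, …, n-1`). -/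
def fundF (n : ℕ) (D : Set ℕ) : QS := fun e =>
  if ∃ f : Fin n → ℕ, Monotone f ∧
      (∀ (j : ℕ) (h : j + 1 < n), f ⟨j, Nat.lt_of_succ_lt h⟩ = f ⟨j + 1, h⟩ → (j + 1) ∉ D) ∧
      (∀ k : ℕ, e k = (Finset.univ.filter (fun p : Fin n => f p = k)).card)
  then (1 : ℚ) else 0

/-- The shifted fundamental quasisymmetric function
`G_P = Σ_{D ⊆ {1,…,n−1}, P ⊆ Spike(D)} F_D`, where
`i ∈ Spike(D)` iff exactly one of `i-1, i` lies in `D`. -/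
def fundG (n : ℕ) (P : Set ℕ) : QS :=
  ∑ D ∈ (Finset.Icc 1 (n - 1)).powerset,
    if ∀ i ∈ P, Xor' ((i - 1) ∈ D) (i ∈ D) then fundF n (↑D : Set ℕ) else 0

/-- A power series is symmetric if it is invariant under every permutation of
the variables. -/
def IsSymmetricFn (f : QS) : Prop :=
  ∀ (σ : Equiv.Perm ℕ) (e : ℕ →₀ ℕ), f (Finsupp.equivMapDomain σ e) = f e

/-! ### Partitions, Young diagrams, semistandard tableaux and Schur functions -/

/-- A partition of `n`, as a weakly decreasing list of positive parts. -/
structure PartitionOf (n : ℕ) where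
  parts : List ℕ
  sorted : parts.Pairwise (· ≥ ·)
  parts_pos : ∀ p ∈ parts, 0 < p
  sum_eq : parts.sum = n

/-- The cells `(r, j)`, `1 ≤ r ≤ ℓ`, `1 ≤ j ≤ λ_r`, of the Young diagram of a partition. -/
def PartitionOf.cells {n : ℕ} (μ : PartitionOf n) : Set (ℕ × ℕ) :=
  { c | ∃ h : c.1 - 1 < μ.parts.length,
      1 ≤ c.1 ∧ 1 ≤ c.2 ∧ c.2 ≤ μ.parts.get ⟨c.1 - 1, h⟩ }

/-- A semistandard Young tableau of shape `μ`: entries (variable indices) weakly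
increase along rows and strictly increase up columns. -/
structure SSYT {n : ℕ} (μ : PartitionOf n) where
  entry : ℕ × ℕ → ℕ
  zero_outside : ∀ c, c ∉ μ.cells → entry c = 0
  row_weak : ∀ r j j', (r, j) ∈ μ.cells → (r, j') ∈ μ.cells → j ≤ j' →
    entry (r, j) ≤ entry (r, j')
  col_strict : ∀ r r' j, (r, j) ∈ μ.cells → (r', j) ∈ μ.cells → r < r' →
    entry (r, j) < entry (r', j)

/-- The Schur function `s_μ = Σ_{T ∈ SSYT(μ)} X^T`. -/
def schur (n : ℕ) (μ : PartitionOf n) : QS := fun e =>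
  (Nat.card {T : SSYT μ // ∀ k : ℕ,
      Nat.card {c : ℕ × ℕ // c ∈ μ.cells ∧ T.entry c = k} = e k} : ℚ)

/-- A nonnegative integer combination of Schur functions. -/
def SchurPositive (f : QS) : Prop :=
  ∃ (k : ℕ) (m : Fin k → ℕ) (sh : (t : Fin k) → PartitionOf (m t)),
    f = ∑ t, schur (m t) (sh t)

/-! ### Strict partitions, shifted tableaux and Schur P-functions -/

/-- A strict partition of `n`, as a strictly decreasing list of positive parts. -/
structure StrictPartition (n : ℕ) where
  parts : List ℕ
  sorted : parts.Pairwise (· > ·)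
  parts_pos : ∀ p ∈ parts, 0 < p
  sum_eq : parts.sum = n

/-- The cells `(r, j)`, `1 ≤ r ≤ ℓ`, `r ≤ j ≤ λ_r + r - 1`, of the shifted Young
diagram of a strict partition. -/
def StrictPartition.cells {n : ℕ} (μ : StrictPartition n) : Set (ℕ × ℕ) :=
  { c | ∃ h : c.1 - 1 < μ.parts.length,
      1 ≤ c.1 ∧ c.1 ≤ c.2 ∧ c.2 ≤ μ.parts.get ⟨c.1 - 1, h⟩ + c.1 - 1 }

/-- A semistandard shifted tableau of shape `μ`.  An entry coded `2k+1` is the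
primed value `k′`, and an entry coded `2k+2` is the unprimed value `k`
(so that the code order is the order `0′ < 0 < 1′ < 1 < ⋯`).  Entries weakly
increase along rows and columns, each row has at most one `k′` for each `k`,
and each column has at most one `k` for each `k`. -/
structure ShSSYT {n : ℕ} (μ : StrictPartition n) where
  entry : ℕ × ℕ → ℕ
  zero_outside : ∀ c, c ∉ μ.cells → entry c = 0
  entry_pos : ∀ c ∈ μ.cells, 1 ≤ entry c
  row_weak : ∀ r j j', (r, j) ∈ μ.cells → (r, j') ∈ μ.cells → j ≤ j' →
    entry (r, j) ≤ entry (r, j')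
  col_weak : ∀ r r' j, (r, j) ∈ μ.cells → (r', j) ∈ μ.cells → r ≤ r' →
    entry (r, j) ≤ entry (r', j)
  row_primed : ∀ r j j', (r, j) ∈ μ.cells → (r, j') ∈ μ.cells →
    entry (r, j) = entry (r, j') → entry (r, j) % 2 = 1 → j = j'
  col_unprimed : ∀ r r' j, (r, j) ∈ μ.cells → (r', j) ∈ μ.cells →
    entry (r, j) = entry (r', j) → entry (r, j) % 2 = 0 → r = r'

/-- The Schur P-function `P_μ`: the sum of `X^{|S|}` over semistandard shifted
tableaux of shape `μ` with no primed entries on the main diagonal. -/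
def schurP (n : ℕ) (μ : StrictPartition n) : QS := fun e =>
  (Nat.card {S : ShSSYT μ //
      (∀ j : ℕ, (j, j) ∈ μ.cells → S.entry (j, j) % 2 = 0) ∧
      (∀ k : ℕ, Nat.card {c : ℕ × ℕ // c ∈ μ.cells ∧ (S.entry c - 1) / 2 = k} = e k)} : ℚ)

/-- A nonnegative integer combination of Schur P-functions. -/
def SchurPPositive (f : QS) : Prop :=
  ∃ (k : ℕ) (m : Fin k → ℕ) (sh : (t : Fin k) → StrictPartition (m t)),
    f = ∑ t, schurP (m t) (sh t)

/-! ### Standard (shifted) tableaux, descents, peaks, reading words -/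

/-- A standard shifted tableau of shape `μ`: the entries `1, …, n` each appear
once and increase along rows and columns. -/
structure ShSYT {n : ℕ} (μ : StrictPartition n) where
  entry : ℕ × ℕ → ℕ
  zero_outside : ∀ c, c ∉ μ.cells → entry c = 0
  bijOn : Set.BijOn entry μ.cells (Set.Icc 1 n)
  row_inc : ∀ r j j', (r, j) ∈ μ.cells → (r, j') ∈ μ.cells → j < j' →
    entry (r, j) < entry (r, j')
  col_inc : ∀ r r' j, (r, j) ∈ μ.cells → (r', j) ∈ μ.cells → r < r' →
    entry (r, j) < entry (r', j)

namespace ShSYT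

variable {n : ℕ} {μ : StrictPartition n}

/-- `i ∈ Des(T)` iff `i` lies in a strictly lower row than `i+1`. -/
def Des (T : ShSYT μ) : Set ℕ :=
  { i | ∃ c ∈ μ.cells, ∃ c' ∈ μ.cells, T.entry c = i ∧ T.entry c' = i + 1 ∧ c.1 < c'.1 }

/-- `i ∈ Peak(T)` iff `i - 1 ∉ Des(T)` and `i ∈ Des(T)`. -/
def Peak (T : ShSYT μ) : Set ℕ := { i | (i - 1) ∉ T.Des ∧ i ∈ T.Des }

/-- The cell containing the value `v`. -/
def cellOf (T : ShSYT μ) (v : ℕ) : ℕ × ℕ :=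
  Classical.epsilon (fun c => c ∈ μ.cells ∧ T.entry c = v)

/-- `before T u v` : the value `u` occurs before the value `v` in the reading word
of `T` (rows left to right, top row to bottom row, the top row being the one
with the largest row index). -/
def before (T : ShSYT μ) (u v : ℕ) : Prop :=
  (T.cellOf v).1 < (T.cellOf u).1 ∨
    ((T.cellOf u).1 = (T.cellOf v).1 ∧ (T.cellOf u).2 < (T.cellOf v).2)

end ShSYT

/-- A standard Young tableau of shape `μ`. -/
structure SYT {n : ℕ} (μ : PartitionOf n) where
  entry : ℕ × ℕ → ℕ
  zero_outside : ∀ c, c ∉ μ.cells → entry c = 0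
  bijOn : Set.BijOn entry μ.cells (Set.Icc 1 n)
  row_inc : ∀ r j j', (r, j) ∈ μ.cells → (r, j') ∈ μ.cells → j < j' →
    entry (r, j) < entry (r, j')
  col_inc : ∀ r r' j, (r, j) ∈ μ.cells → (r', j) ∈ μ.cells → r < r' →
    entry (r, j) < entry (r', j)

namespace SYT

variable {n : ℕ} {μ : PartitionOf n}

/-- `i ∈ Des(T)` iff `i` lies in a strictly lower row than `i+1`. -/
def Des (T : SYT μ) : Set ℕ :=
  { i | ∃ c ∈ μ.cells, ∃ c' ∈ μ.cells, T.entry c = i ∧ T.entry c' = i + 1 ∧ c.1 < c'.1 }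

/-- The cell containing the value `v`. -/
def cellOf (T : SYT μ) (v : ℕ) : ℕ × ℕ :=
  Classical.epsilon (fun c => c ∈ μ.cells ∧ T.entry c = v)

/-- Reading-word order on values (rows left to right, top row to bottom row). -/
def before (T : SYT μ) (u v : ℕ) : Prop :=
  (T.cellOf v).1 < (T.cellOf u).1 ∨
    ((T.cellOf u).1 = (T.cellOf v).1 ∧ (T.cellOf u).2 < (T.cellOf v).2)

end SYT

/-! ### Haiman's elementary (shifted) dual equivalence moves -/

/-- `posBtw lt x c y`: `c` occurs positionally between `x` and `y`,
where `lt` is the "occurs before" relation. -/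
def posBtw (lt : ℕ → ℕ → Prop) (x c y : ℕ) : Prop :=
  (lt x c ∧ lt c y) ∨ (lt y c ∧ lt c x)

/-- Swap the two values `a`, `b` in a filling. -/
def swapVals (a b : ℕ) (f : ℕ × ℕ → ℕ) : ℕ × ℕ → ℕ :=
  fun c => if f c = a then b else if f c = b then a else f c

/-- Swap the values of a function at `a` and `b`. -/
def swapFn {α : Type} (f : ℕ → α) (a b : ℕ) : ℕ → α :=
  fun v => if v = a then f b else if v = b then f a else f v

/-- The pair of values interchanged by Haiman's elementary shifted dual
equivalence move `b_i`, given the "occurs before" relation of the word: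
with `{a,b,c,d} = {i−1,i,i+1,i+2}`, if `a,b` are consecutive values, `c` is
consecutive with `a,b` and occurs between `a` and `b`, and `d` is consecutive
with `a,b,c` and occurs to the left of `c`, then `b_i` interchanges `a` and `b`;
otherwise it is the identity (`none`). -/
def bTarget (lt : ℕ → ℕ → Prop) (i : ℕ) : Option (ℕ × ℕ) :=
  if posBtw lt (i-1) (i+1) i ∧ lt (i+2) (i+1) then some (i-1, i)
  else if posBtw lt i (i-1) (i+1) ∧ lt (i+2) (i-1) then some (i, i+1)
  else if posBtw lt i (i+2) (i+1) ∧ lt (i-1) (i+2) then some (i, i+1)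
  else if posBtw lt (i+1) i (i+2) ∧ lt (i-1) i then some (i+1, i+2)
  else none

/-- The entry function of `b_i(T)` for a standard shifted tableau `T`. -/
def bRawEntry {n : ℕ} {μ : StrictPartition n} (i : ℕ) (T : ShSYT μ) : ℕ × ℕ → ℕ :=
  match bTarget T.before i with
  | some (a, b) => swapVals a b T.entry
  | none => T.entry

/-- Haiman's elementary shifted dual equivalence involution `b_i` on standard
shifted tableaux (acting through the reading word). -/
def bMove {n : ℕ} {μ : StrictPartition n} (i : ℕ) (T : ShSYT μ) : ShSYT μ :=
  if h : ∃ T' : ShSYT μ, T'.entry = bRawEntry i T then h.choose else T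

/-- The pair of values interchanged by the elementary dual equivalence move
`d_i`: if `i` occurs between `i-1` and `i+1` the move is the identity; if `i+1`
occurs between `i-1` and `i` it interchanges `i-1` and `i`; if `i-1` occurs
between `i` and `i+1` it interchanges `i` and `i+1`. -/
def dTarget (lt : ℕ → ℕ → Prop) (i : ℕ) : Option (ℕ × ℕ) :=
  if posBtw lt (i-1) (i+1) i then some (i-1, i)
  else if posBtw lt i (i-1) (i+1) then some (i, i+1)
  else none

/-- The entry function of `d_i(T)` for a standard Young tableau `T`. -/
def dRawEntry {n : ℕ} {μ : PartitionOf n} (i : ℕ) (T : SYT μ) : ℕ × ℕ → ℕ :=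
  match dTarget T.before i with
  | some (a, b) => swapVals a b T.entry
  | none => T.entry

/-- Haiman's elementary dual equivalence involution `d_i` on standard Young
tableaux (acting through the reading word). -/
def dMove {n : ℕ} {μ : PartitionOf n} (i : ℕ) (T : SYT μ) : SYT μ :=
  if h : ∃ T' : SYT μ, T'.entry = dRawEntry i T then h.choose else T

/-! ### Restricted classes and restricted statistics -/

/-- The equivalence class of `T` generated by the involutions `φ_j, …, φ_i`. -/
def classOf {A : Type} (φ : ℕ → A → A) (j i : ℕ) (T : A) : Set A :=
  { U | Relation.ReflTransGen (fun x y => ∃ k, j ≤ k ∧ k ≤ i ∧ φ k x = y) T U }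

/-- The restricted descent set `Des_{(j,i)}(T) = (Des(T) ∩ {j−1,…,i}) − (j−2)`. -/
def resDes {A : Type} (Des : A → Set ℕ) (j i : ℕ) (T : A) : Set ℕ :=
  (fun x => x - (j - 2)) '' (Des T ∩ Set.Icc (j - 1) i)

/-- The restricted peak set `Peak_{(j,i)}(T) = (Peak(T) ∩ {j−1,…,i+1}) − (j−2)`. -/
def resPeak {A : Type} (Peak : A → Set ℕ) (j i : ℕ) (T : A) : Set ℕ :=
  (fun x => x - (j - 2)) '' (Peak T ∩ Set.Icc (j - 1) (i + 1))

/-- `Σ_{U ∈ [T]_{(j,i)}} F_{Des_{(j,i)}(U)}`, with `F`'s of degree `m`. -/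
def classFSum {A : Type} (Des : A → Set ℕ) (φ : ℕ → A → A) (m j i : ℕ) (T : A) : QS :=
  ∑ᶠ U ∈ classOf φ j i T, fundF m (resDes Des j i U)

/-- `Σ_{U ∈ [T]_{(j,i)}} G_{Peak_{(j,i)}(U)}`, with `G`'s of degree `m`. -/
def classGSum {A : Type} (Peak : A → Set ℕ) (φ : ℕ → A → A) (m j i : ℕ) (T : A) : QS :=
  ∑ᶠ U ∈ classOf φ j i T, fundG m (resPeak Peak j i U)

/-! ### (Strong and weak) dual equivalence -/

/-- A (strong) dual equivalence for `(A, Des)`: a family of involutions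
`φ_i`, `1 < i < n`, satisfying axioms (i)–(iv). -/
structure IsDualEquiv (n : ℕ) {A : Type} (Des : A → Set ℕ) (φ : ℕ → A → A) : Prop where
  invol : ∀ i, 1 < i → i < n → ∀ T, φ i (φ i T) = T
  fixed_iff : ∀ i, 1 < i → i < n → ∀ T, (φ i T = T ↔ ((i - 1) ∈ Des T ↔ i ∈ Des T))
  des_far : ∀ i, 1 < i → i < n → ∀ T, φ i T ≠ T →
    ∀ h, (h < i - 2 ∨ i + 1 < h) → (h ∈ Des T ↔ h ∈ Des (φ i T))
  des_lo : ∀ i, 1 < i → i < n → ∀ T, φ i T ≠ T →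
    ¬((i - 2) ∈ Des T ↔ (i - 2) ∈ Des (φ i T)) → φ (i - 1) T ≠ T
  des_hi : ∀ i, 1 < i → i < n → ∀ T, φ i T ≠ T →
    ¬((i + 1) ∈ Des T ↔ (i + 1) ∈ Des (φ i T)) → φ (i + 1) T ≠ T
  des_swap : ∀ i, 1 < i → i < n → ∀ T, φ i T ≠ T →
    (((i - 1) ∈ Des T ↔ (i - 1) ∉ Des (φ i T)) ∧ (i ∈ Des T ↔ i ∉ Des (φ i T)))
  commutes : ∀ i j, 1 < i → i < n → 1 < j → j < n → j + 3 ≤ i →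
    ∀ T, φ j (φ i T) = φ i (φ j T)
  local_schur : ∀ i j, 1 < j → i < n → 1 ≤ i - j → i - j ≤ 3 → ∀ T,
    ∃ (m : ℕ) (ν : PartitionOf m), classFSum Des φ (i - j + 2) j i T = schur m ν

/-- A weak dual equivalence for `(A, Des)`: axioms (i), (ii), (iii) together
with the local conditions (iv-a) and (iv-b). -/
structure IsWeakDualEquiv (n : ℕ) {A : Type} (Des : A → Set ℕ) (φ : ℕ → A → A) : Prop where
  invol : ∀ i, 1 < i → i < n → ∀ T, φ i (φ i T) = T
  fixed_iff : ∀ i, 1 < i → i < n → ∀ T, (φ i T = T ↔ ((i - 1) ∈ Des T ↔ i ∈ Des T))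
  des_far : ∀ i, 1 < i → i < n → ∀ T, φ i T ≠ T →
    ∀ h, (h < i - 2 ∨ i + 1 < h) → (h ∈ Des T ↔ h ∈ Des (φ i T))
  des_lo : ∀ i, 1 < i → i < n → ∀ T, φ i T ≠ T →
    ¬((i - 2) ∈ Des T ↔ (i - 2) ∈ Des (φ i T)) → φ (i - 1) T ≠ T
  des_hi : ∀ i, 1 < i → i < n → ∀ T, φ i T ≠ T →
    ¬((i + 1) ∈ Des T ↔ (i + 1) ∈ Des (φ i T)) → φ (i + 1) T ≠ T
  des_swap : ∀ i, 1 < i → i < n → ∀ T, φ i T ≠ T →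
    (((i - 1) ∈ Des T ↔ (i - 1) ∉ Des (φ i T)) ∧ (i ∈ Des T ↔ i ∉ Des (φ i T)))
  commutes : ∀ i j, 1 < i → i < n → 1 < j → j < n → j + 3 ≤ i →
    ∀ T, φ j (φ i T) = φ i (φ j T)
  iva_pos : ∀ i, 2 < i → i < n → ∀ T, SchurPositive (classFSum Des φ 3 (i - 1) i T)
  iva_des : ∀ i, 2 < i → i + 1 < n → ∀ T,
    φ (i - 1) T ≠ T → φ i T ≠ T → φ (i + 1) T ≠ T →
    φ (i - 1) (φ i T) ≠ φ i T → φ i (φ i T) ≠ φ i T → φ (i + 1) (φ i T) ≠ φ i T →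
    resDes Des (i - 1) i '' classOf φ (i - 1) i T
      = resDes Des i (i + 1) '' classOf φ i (i + 1) T
  ivb_pos : ∀ i, 3 < i → i < n → ∀ T, SchurPositive (classFSum Des φ 4 (i - 2) i T)
  ivb_chain : ∀ i, 3 < i → i + 1 < n → ∀ T,
    φ (i + 1) T ≠ T → φ (i + 1) (φ i T) ≠ φ i T →
    φ (i + 1) (φ i (φ (i - 2) T)) = φ i (φ (i - 2) T) →
    ∀ m, 1 ≤ m →
      φ (i - 2) ((fun x => φ i (φ (i - 2) x))^[m - 1] (φ i T)) ≠
        (fun x => φ i (φ (i - 2) x))^[m - 1] (φ i T) →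
      φ i (φ (i - 2) ((fun x => φ i (φ (i - 2) x))^[m - 1] (φ i T))) ≠
        φ (i - 2) ((fun x => φ i (φ (i - 2) x))^[m - 1] (φ i T)) →
      φ (i + 1) ((fun x => φ i (φ (i - 2) x))^[m] (φ i T)) ≠
        (fun x => φ i (φ (i - 2) x))^[m] (φ i T)

/-! ### Shifted dual equivalence -/

/-- Axioms (i), (ii), (iii) of shifted dual equivalence for involutions
`φ_i`, `1 < i < n - 1`. -/
structure ShiftedDEBasic (n : ℕ) {A : Type} (Peak : A → Set ℕ) (φ : ℕ → A → A) : Prop where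
  invol : ∀ i, 1 < i → i + 1 < n → ∀ T, φ i (φ i T) = T
  fixed_iff : ∀ i, 1 < i → i + 1 < n → ∀ T,
    (φ i T = T ↔ (i ∉ Peak T ∧ (i + 1) ∉ Peak T))
  peak_move : ∀ i, 1 < i → i + 1 < n → ∀ T, φ i T ≠ T →
    (i ∈ Peak T ↔ (i + 1) ∈ Peak (φ i T))
  peak_far : ∀ i, 1 < i → i + 1 < n → ∀ T, φ i T ≠ T →
    ∀ h, (h ≤ i - 2 ∨ i + 3 ≤ h) → (h ∈ Peak T ↔ h ∈ Peak (φ i T))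
  commutes : ∀ i j, 1 < i → i + 1 < n → 1 < j → j + 1 < n → j + 4 ≤ i →
    ∀ T, φ j (φ i T) = φ i (φ j T)

/-- A (strong) shifted dual equivalence for `(A, Peak)`: axioms (i)–(iii)
together with the local Schur-P condition (iv). -/
structure IsShiftedDualEquiv (n : ℕ) {A : Type} (Peak : A → Set ℕ) (φ : ℕ → A → A)
    extends ShiftedDEBasic n Peak φ : Prop where
  local_P : ∀ i j, 1 < j → i + 1 < n → 1 ≤ i - j → i - j ≤ 4 → ∀ T,
    ∃ (m : ℕ) (ν : StrictPartition m), classGSum Peak φ (i - j + 4) j i T = schurP m ν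

/-! ### Signed permutations and the involutions of Definition 5.1 -/

/-- A signed permutation of `n`, recorded by the position `w.1 v` of each value
`v ∈ {1,…,n}` together with its sign `w.2 v` (`true` = primed). -/
def IsSignedPerm (n : ℕ) (w : (ℕ → ℕ) × (ℕ → Bool)) : Prop :=
  Set.BijOn w.1 (Set.Icc 1 n) (Set.Icc 1 n) ∧
  ∀ v, v ∉ Set.Icc 1 n → w.1 v = 0 ∧ w.2 v = false

abbrev SignedPerm (n : ℕ) : Type := { w : (ℕ → ℕ) × (ℕ → Bool) // IsSignedPerm n w }

/-- `i ∈ Des(w)` iff `i` is unprimed and appears to the right of `i+1`, or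
`i+1` is primed and appears to the right of `i`. -/
def rawSPDes (n : ℕ) (w : (ℕ → ℕ) × (ℕ → Bool)) (i : ℕ) : Prop :=
  1 ≤ i ∧ i < n ∧
    ((w.2 i = false ∧ w.1 (i + 1) < w.1 i) ∨ (w.2 (i + 1) = true ∧ w.1 i < w.1 (i + 1)))

def SignedPerm.Des {n : ℕ} (w : SignedPerm n) : Set ℕ := { i | rawSPDes n w.1 i }

/-- The leftmost of the values `i-1, i, i+1` (w.r.t. the position function `p`). -/
def leftV (p : ℕ → ℕ) (i : ℕ) : ℕ :=
  if p (i - 1) < p i ∧ p (i - 1) < p (i + 1) then i - 1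
  else if p i < p (i + 1) then i
  else i + 1

/-- The rightmost of the values `i-1, i, i+1` (w.r.t. the position function `p`). -/
def rightV (p : ℕ → ℕ) (i : ℕ) : ℕ :=
  if p i < p (i - 1) ∧ p (i + 1) < p (i - 1) then i - 1
  else if p (i + 1) < p i then i
  else i + 1

/-- The involution of Definition 5.1 on raw data: with `{a,b,c} = {i−1,i,i+1}`,
`a` leftmost and `c` rightmost, if `i ∉ Spike(w)` do nothing; else if exactly one
of `b, c` is primed, interchange the signs of `b` and `c`; else interchange the
values `a` and `c`, leaving the signs in the original positions. -/
def rawPhi (n i : ℕ) (w : (ℕ → ℕ) × (ℕ → Bool)) : (ℕ → ℕ) × (ℕ → Bool) :=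
  if Xor' (rawSPDes n w (i - 1)) (rawSPDes n w i) then
    let a := leftV w.1 i
    let c := rightV w.1 i
    let b := 3 * i - (a + c)
    if w.2 b ≠ w.2 c then (w.1, swapFn w.2 b c)
    else (swapFn w.1 a c, swapFn w.2 a c)
  else w

/-- The involution `φ_i` of Definition 5.1 on signed permutations. -/
def phiS (n : ℕ) (i : ℕ) (w : SignedPerm n) : SignedPerm n :=
  if h : IsSignedPerm n (rawPhi n i w.1) then ⟨rawPhi n i w.1, h⟩ else w

/-! ### Signed standard shifted tableaux and the involutions of Definition 5.2 -/

/-- A signed standard shifted tableau of shape `μ`: a standard shifted tableau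
together with a sign for each value (`true` = primed). -/
structure SignedShSYT {n : ℕ} (μ : StrictPartition n) where
  entry : ℕ × ℕ → ℕ
  sign : ℕ → Bool
  zero_outside : ∀ c, c ∉ μ.cells → entry c = 0
  sign_outside : ∀ v, v ∉ Set.Icc 1 n → sign v = false
  bijOn : Set.BijOn entry μ.cells (Set.Icc 1 n)
  row_inc : ∀ r j j', (r, j) ∈ μ.cells → (r, j') ∈ μ.cells → j < j' →
    entry (r, j) < entry (r, j')
  col_inc : ∀ r r' j, (r, j) ∈ μ.cells → (r', j) ∈ μ.cells → r < r' →
    entry (r, j) < entry (r', j)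

namespace SignedShSYT

variable {n : ℕ} {μ : StrictPartition n}

/-- `i ∈ Des(S)` iff `i` is unprimed and in a strictly lower row than `i+1`, or
`i+1` is primed and in a weakly lower row than `i`. -/
def Des (S : SignedShSYT μ) : Set ℕ :=
  { i | ∃ c ∈ μ.cells, ∃ c' ∈ μ.cells, S.entry c = i ∧ S.entry c' = i + 1 ∧
      ((S.sign i = false ∧ c.1 < c'.1) ∨ (S.sign (i + 1) = true ∧ c'.1 ≤ c.1)) }

/-- The cell containing the value `v`. -/
def cellOf (S : SignedShSYT μ) (v : ℕ) : ℕ × ℕ :=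
  Classical.epsilon (fun c => c ∈ μ.cells ∧ S.entry c = v)

/-- Reading-word order on values. -/
def before (S : SignedShSYT μ) (u v : ℕ) : Prop :=
  (S.cellOf v).1 < (S.cellOf u).1 ∨
    ((S.cellOf u).1 = (S.cellOf v).1 ∧ (S.cellOf u).2 < (S.cellOf v).2)

end SignedShSYT

/-- The first of the values `i-1, i, i+1` w.r.t. an "occurs before" relation. -/
def firstV (lt : ℕ → ℕ → Prop) (i : ℕ) : ℕ :=
  if lt (i - 1) i ∧ lt (i - 1) (i + 1) then i - 1
  else if lt i (i + 1) then i
  else i + 1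

/-- The last of the values `i-1, i, i+1` w.r.t. an "occurs before" relation. -/
def lastV (lt : ℕ → ℕ → Prop) (i : ℕ) : ℕ :=
  if lt i (i - 1) ∧ lt (i + 1) (i - 1) then i - 1
  else if lt (i + 1) i then i
  else i + 1

/-- The raw action of the map `ψ_i` of Definition 5.2 on a signed standard
shifted tableau, producing the new entry function and the new sign function:
with `{a,b,c} = {i−1,i,i+1}`, `a` first and `c` last in the reading word:
if `i ∉ Spike(S)` do nothing; else if `a` and `c` are in the same column, toggle
the sign on `c`; else if exactly one of `b, c` is signed, swap the signs of `b`
and `c`; else swap the values `a` and `c`, leaving the signs in the original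
positions. -/
def rawPsi {n : ℕ} {μ : StrictPartition n} (i : ℕ) (S : SignedShSYT μ) :
    (ℕ × ℕ → ℕ) × (ℕ → Bool) :=
  if Xor' ((i - 1) ∈ S.Des) (i ∈ S.Des) then
    let a := firstV S.before i
    let c := lastV S.before i
    let b := 3 * i - (a + c)
    if (S.cellOf a).2 = (S.cellOf c).2 then
      (S.entry, Function.update S.sign c (!(S.sign c)))
    else if S.sign b ≠ S.sign c then (S.entry, swapFn S.sign b c)
    else (swapVals a c S.entry, swapFn S.sign a c)
  else (S.entry, S.sign)

/-- The map `ψ_i` of Definition 5.2 on signed standard shifted tableaux. -/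
def psiMove {n : ℕ} {μ : StrictPartition n} (i : ℕ) (S : SignedShSYT μ) : SignedShSYT μ :=
  if h : ∃ S' : SignedShSYT μ, S'.entry = (rawPsi i S).1 ∧ S'.sign = (rawPsi i S).2
  then h.choose else S

/-! ### Isomorphisms of restricted classes -/

/-- The restricted class `([T]_{(j,i)}, Peak_{(j,i)})` under `φ_j, …, φ_i` is
isomorphic to `(ShSYT(ν), Peak)` under Haiman's involutions `b`. -/
def ResIso {A : Type} (Peak : A → Set ℕ) (φ : ℕ → A → A) (j i : ℕ) (T : A)
    {m : ℕ} (ν : StrictPartition m) : Prop :=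
  ∃ ψ : A → ShSYT ν,
    Set.BijOn ψ (classOf φ j i T) Set.univ ∧
    (∀ U ∈ classOf φ j i T, resPeak Peak j i U = ShSYT.Peak (ψ U)) ∧
    (∀ k, j ≤ k → k ≤ i → ∀ U ∈ classOf φ j i T, ψ (φ k U) = bMove (k - j + 2) (ψ U))

/-- The restricted classes `[T]_{(j,i)}` and `[S]_{(j,i)}` are isomorphic
(as sets with the restricted peak statistic and the involutions `φ_j, …, φ_i`). -/
def ResClassIso {A : Type} (Peak : A → Set ℕ) (φ : ℕ → A → A) (j i : ℕ) (T S : A) : Prop :=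
  ∃ ψ : A → A,
    Set.BijOn ψ (classOf φ j i T) (classOf φ j i S) ∧
    (∀ U ∈ classOf φ j i T, resPeak Peak j i U = resPeak Peak j i (ψ U)) ∧
    (∀ k, j ≤ k → k ≤ i → ∀ U ∈ classOf φ j i T, ψ (φ k U) = φ k (ψ U))

end

noncomputable section Aux

open Finset

namespace SPF

/-! ### Generic lemmas -/

lemma sum_getD (l : List ℕ) : ∑ i ∈ Finset.range l.length, l.getD i 0 = l.sum := by
  induction l with
  | nil => simp
  | cons a l ih =>
    rw [List.length_cons, Finset.sum_range_succ']
    simp only [List.getD_cons_succ, List.getD_cons_zero, ih, List.sum_cons]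
    omega

lemma monotone_le_iff {n : ℕ} {f : Fin n → ℕ} (hf : Monotone f) (p : Fin n) (k : ℕ) :
    f p ≤ k ↔ (p : ℕ) < (Finset.univ.filter fun q => f q ≤ k).card := by
  constructor
  · intro h
    have hsub : Finset.Iic p ⊆ Finset.univ.filter fun q => f q ≤ k := by
      intro q hq
      simp only [Finset.mem_Iic] at hq
      simp only [Finset.mem_filter, Finset.mem_univ, true_and]
      exact le_trans (hf hq) h
    have := Finset.card_le_card hsub
    rw [Fin.card_Iic] at this
    omega
  · intro h
    by_contra hk
    push_neg at hk
    have hsub : (Finset.univ.filter fun q => f q ≤ k) ⊆ Finset.Iio p := by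
      intro q hq
      simp only [Finset.mem_filter, Finset.mem_univ, true_and] at hq
      simp only [Finset.mem_Iio]
      by_contra hpq
      push_neg at hpq
      exact absurd (le_trans (hf hpq) hq) (by omega)
    have := Finset.card_le_card hsub
    rw [Fin.card_Iio] at this
    omega

lemma card_filter_le {n : ℕ} (f : Fin n → ℕ) (k : ℕ) :
    (Finset.univ.filter fun q => f q ≤ k).card
      = ∑ k' ∈ Finset.range (k+1), (Finset.univ.filter fun q => f q = k').card := by
  classical
  rw [← Finset.card_biUnion]
  · congr 1
    ext q
    simp only [Finset.mem_filter, Finset.mem_univ, true_and, Finset.mem_biUnion,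
      Finset.mem_range, Nat.lt_succ_iff]
    constructor
    · intro h; exact ⟨f q, h, rfl⟩
    · rintro ⟨k', hk', rfl⟩; exact hk'
  · intro a _ b _ hab
    simp only [Finset.disjoint_left, Finset.mem_filter, Finset.mem_univ, true_and]
    rintro q rfl h
    exact hab h

lemma monotone_unique {n : ℕ} {f g : Fin n → ℕ} (hf : Monotone f) (hg : Monotone g)
    (h : ∀ k, (Finset.univ.filter fun p => f p = k).card
      = (Finset.univ.filter fun p => g p = k).card) : f = g := by
  have hle : ∀ k, (Finset.univ.filter fun q => f q ≤ k).card
      = (Finset.univ.filter fun q => g q ≤ k).card := by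
    intro k
    rw [card_filter_le, card_filter_le]
    exact Finset.sum_congr rfl fun k' _ => h k'
  funext p
  have h1 : f p ≤ g p := by
    rw [monotone_le_iff hf p (g p), hle]
    exact (monotone_le_iff hg p (g p)).mp le_rfl
  have h2 : g p ≤ f p := by
    rw [monotone_le_iff hg p (f p), ← hle]
    exact (monotone_le_iff hf p (f p)).mp le_rfl
  omega

/-- The rank characterization of a labeling compatible with an injective key. -/
lemma rank_eq_of_bijOn {s : Finset (ℕ × ℕ)} {K : ℕ × ℕ → ℕ ×ₗ ℕ} {lab : ℕ × ℕ → ℕ}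
    (hbij : Set.BijOn lab ↑s (Set.Icc 1 s.card))
    (hmono : ∀ c ∈ s, ∀ c' ∈ s, (lab c < lab c' ↔ K c < K c')) {c : ℕ × ℕ} (hc : c ∈ s) :
    lab c = (s.filter fun c' => K c' ≤ K c).card := by
  classical
  have hfe : (s.filter fun c' => K c' ≤ K c) = s.filter fun c' => lab c' ≤ lab c := by
    apply Finset.filter_congr
    intro c' hc'
    rw [← not_lt, ← not_lt, hmono c hc c' hc']
  rw [hfe]
  have hinj : Set.InjOn lab ↑(s.filter fun c' => lab c' ≤ lab c) := by
    apply hbij.injOn.mono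
    intro x hx
    simp only [Finset.coe_filter, Set.mem_setOf_eq] at hx
    exact hx.1
  have himg : (s.filter fun c' => lab c' ≤ lab c).image lab = Finset.Icc 1 (lab c) := by
    ext x
    simp only [Finset.mem_image, Finset.mem_filter, Finset.mem_Icc]
    constructor
    · rintro ⟨c', ⟨hc', hle⟩, rfl⟩
      exact ⟨(hbij.mapsTo hc').1, hle⟩
    · rintro ⟨h1, h2⟩
      have hx : x ∈ Set.Icc 1 s.card := ⟨h1, le_trans h2 (hbij.mapsTo hc).2⟩
      obtain ⟨c', hc', rfl⟩ := hbij.surjOn hx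
      exact ⟨c', ⟨hc', h2⟩, rfl⟩
  have hcard := Finset.card_image_of_injOn hinj
  rw [himg, Nat.card_Icc] at hcard
  omega


/-! ### Strict partition cell lemmas -/

namespace SP

variable {n : ℕ} (lam : StrictPartition n)

/-- The `i`-th part (0-indexed), or `0`. -/
def part (i : ℕ) : ℕ := lam.parts.getD i 0

lemma part_eq {i : ℕ} (h : i < lam.parts.length) :
    part lam i = lam.parts.get ⟨i, h⟩ := by
  rw [part, List.getD_eq_getElem _ _ h, List.get_eq_getElem]

lemma mem_cells_iff {c : ℕ × ℕ} :
    c ∈ lam.cells ↔ c.1 - 1 < lam.parts.length ∧ 1 ≤ c.1 ∧ c.1 ≤ c.2 ∧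
      c.2 ≤ part lam (c.1 - 1) + c.1 - 1 := by
  constructor
  · rintro ⟨h, h1, h2, h3⟩
    refine ⟨h, h1, h2, ?_⟩
    rwa [part_eq lam h]
  · rintro ⟨h, h1, h2, h3⟩
    refine ⟨h, h1, h2, ?_⟩
    rwa [part_eq lam h] at h3

lemma part_lt {i : ℕ} (h : i + 1 < lam.parts.length) : part lam (i+1) < part lam i := by
  have h0 : i < lam.parts.length := by omega
  have := lam.sorted.rel_get_of_lt (a := ⟨i, h0⟩) (b := ⟨i+1, h⟩)
    (by simp [Fin.lt_def])
  rw [part_eq lam h, part_eq lam h0]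
  exact this

lemma part_add_le' : ∀ (d i : ℕ), i + d < lam.parts.length →
    part lam (i + d) + d ≤ part lam i := by
  intro d
  induction d with
  | zero => intro i _; simp
  | succ d ih =>
    intro i h
    have h1 : part lam ((i+1) + d) + d ≤ part lam (i+1) := ih (i+1) (by omega)
    have h2 : part lam (i+1) < part lam i := part_lt lam (by omega)
    have : i + (d+1) = (i+1) + d := by omega
    rw [this]
    omega

lemma part_add_le {i j : ℕ} (hij : i ≤ j) (hj : j < lam.parts.length) :
    part lam j + (j - i) ≤ part lam i := by
  obtain ⟨d, rfl⟩ := Nat.exists_eq_add_of_le hij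
  have := part_add_le' lam d i (by omega)
  omega

/-- A cell with larger column in a weakly lower row: same row works. -/
lemma mem_cells_of_le {r r' j j' : ℕ} (h : (r, j) ∈ lam.cells) (h' : (r', j') ∈ lam.cells)
    (hr : r ≤ r') (hj : j ≤ j') : (r, j') ∈ lam.cells := by
  rw [mem_cells_iff] at h h' ⊢
  dsimp only at h h' ⊢
  obtain ⟨ha, hb, hc, hd⟩ := h
  obtain ⟨ha', hb', hc', hd'⟩ := h'
  refine ⟨ha, hb, by omega, ?_⟩
  have := part_add_le lam (i := r - 1) (j := r' - 1) (by omega) ha'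
  omega

/-- Finset of cells. -/
def cellsF : Finset (ℕ × ℕ) :=
  (Finset.range lam.parts.length).biUnion fun i =>
    (Finset.Icc (i+1) (part lam i + i)).image fun j => (i+1, j)

lemma mem_cellsF {c : ℕ × ℕ} : c ∈ cellsF lam ↔ c ∈ lam.cells := by
  obtain ⟨a, b⟩ := c
  rw [mem_cells_iff]
  simp only [cellsF, Finset.mem_biUnion, Finset.mem_range, Finset.mem_image, Finset.mem_Icc,
    Prod.mk.injEq]
  constructor
  · rintro ⟨i, hi, j, ⟨h1, h2⟩, rfl, rfl⟩
    simp only [Nat.add_sub_cancel]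
    exact ⟨hi, by omega, by omega, by omega⟩
  · rintro ⟨h1, h2, h3, h4⟩
    exact ⟨a - 1, h1, b, ⟨by omega, by omega⟩, by omega, rfl⟩

lemma coe_cellsF : (cellsF lam : Set (ℕ × ℕ)) = lam.cells := by
  ext c; rw [Finset.mem_coe, mem_cellsF]

lemma card_cellsF : (cellsF lam).card = n := by
  rw [cellsF, Finset.card_biUnion]
  · have h1 : ∀ i ∈ Finset.range lam.parts.length,
        ((Finset.Icc (i+1) (part lam i + i)).image fun j => (i+1, j)).card = part lam i := by
      intro i _
      rw [Finset.card_image_of_injective _ (fun a b h => by simpa using h), Nat.card_Icc]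
      omega
    rw [Finset.sum_congr rfl h1]
    have h2 := sum_getD lam.parts
    rw [lam.sum_eq] at h2
    exact h2
  · intro i _ j _ hij
    simp only [Finset.disjoint_left, Finset.mem_image, Finset.mem_Icc]
    rintro c ⟨x, _, rfl⟩ ⟨y, _, h⟩
    apply hij
    have := congrArg Prod.fst h
    simp only at this
    omega

end SP

/-! ### ShSSYT lemmas -/

namespace T

variable {n : ℕ} {lam : StrictPartition n}

lemma ext_entry {T T' : ShSSYT lam} (h : T.entry = T'.entry) : T = T' := by
  cases T; cases T'; cases h; rfl

/-- The standardization key: entry first, then row (primed) or column (unprimed). -/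
def keyT (T : ShSSYT lam) (c : ℕ × ℕ) : ℕ ×ₗ ℕ :=
  toLex (T.entry c, if T.entry c % 2 = 1 then c.1 else c.2)

lemma strip (T : ShSSYT lam) {c c' : ℕ × ℕ} (hc : c ∈ lam.cells) (hc' : c' ∈ lam.cells)
    (he : T.entry c = T.entry c') (hev : T.entry c % 2 = 0) (hr : c.1 < c'.1) :
    c'.2 < c.2 := by
  obtain ⟨r, j⟩ := c
  obtain ⟨r', j'⟩ := c'
  simp only at hr ⊢
  by_contra hle
  push_neg at hle
  rcases eq_or_lt_of_le hle with heq | hlt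
  · subst heq
    exact absurd (T.col_unprimed r r' j hc hc' he hev) (by omega)
  · have hmem : (r, j') ∈ lam.cells := SP.mem_cells_of_le lam hc hc' (le_of_lt hr) (le_of_lt hlt)
    have h1 := T.row_weak r j j' hc hmem (le_of_lt hlt)
    have h2 := T.col_weak r r' j' hmem hc' (le_of_lt hr)
    have heq2 : T.entry (r, j') = T.entry (r', j') := by omega
    have := T.col_unprimed r r' j' hmem hc' heq2 (by omega)
    omega

lemma keyT_lt_of_row (T : ShSSYT lam) {r j j' : ℕ} (hc : (r, j) ∈ lam.cells)
    (hc' : (r, j') ∈ lam.cells) (h : j < j') : keyT T (r, j) < keyT T (r, j') := by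
  rw [keyT, keyT, Prod.Lex.lt_iff]
  have hw := T.row_weak r j j' hc hc' h.le
  rcases eq_or_lt_of_le hw with heq | hlt
  · right
    refine ⟨heq, ?_⟩
    rcases Nat.mod_two_eq_zero_or_one (T.entry (r, j)) with hev | hod
    · simp only [← heq]
      rw [if_neg (by omega), if_neg (by omega)]
      exact h
    · exact absurd (T.row_primed r j j' hc hc' heq hod) (by omega)
  · left; exact hlt

lemma keyT_lt_of_col (T : ShSSYT lam) {r r' j : ℕ} (hc : (r, j) ∈ lam.cells)
    (hc' : (r', j) ∈ lam.cells) (h : r < r') : keyT T (r, j) < keyT T (r', j) := by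
  rw [keyT, keyT, Prod.Lex.lt_iff]
  have hw := T.col_weak r r' j hc hc' h.le
  rcases eq_or_lt_of_le hw with heq | hlt
  · right
    refine ⟨heq, ?_⟩
    rcases Nat.mod_two_eq_zero_or_one (T.entry (r, j)) with hev | hod
    · exact absurd (T.col_unprimed r r' j hc hc' heq hev) (by omega)
    · simp only [← heq]
      rw [if_pos hod, if_pos hod]
      exact h
  · left; exact hlt

lemma keyT_injOn (T : ShSSYT lam) {c c' : ℕ × ℕ} (hc : c ∈ lam.cells) (hc' : c' ∈ lam.cells)
    (h : keyT T c = keyT T c') : c = c' := by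
  obtain ⟨r, j⟩ := c
  obtain ⟨r', j'⟩ := c'
  rw [keyT, keyT] at h
  have h2 := congrArg (fun x : ℕ ×ₗ ℕ => (ofLex x).1) h
  have h3 := congrArg (fun x : ℕ ×ₗ ℕ => (ofLex x).2) h
  simp only [ofLex_toLex] at h2 h3
  rcases Nat.mod_two_eq_zero_or_one (T.entry (r, j)) with hev | hod
  · rw [if_neg (by omega), if_neg (by omega)] at h3
    subst h3
    have := T.col_unprimed r r' j hc hc' h2 hev
    subst this
    rfl
  · rw [if_pos hod, if_pos (by omega)] at h3
    subst h3
    have := T.row_primed r j j' hc hc' h2 hod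
    subst this
    rfl

end T

/-! ### SignedShSYT lemmas -/

namespace SG

variable {n : ℕ} {lam : StrictPartition n}

lemma ext_sg {S S' : SignedShSYT lam} (he : S.entry = S'.entry) (hs : S.sign = S'.sign) :
    S = S' := by
  cases S; cases S'; cases he; cases hs; rfl

lemma finite_sg : Finite (SignedShSYT lam) := by
  classical
  let F : SignedShSYT lam → ((SP.cellsF lam) → Fin (n+1)) × (Fin (n+1) → Bool) :=
    fun S => (fun c => ⟨S.entry c.val, by
      have := S.bijOn.mapsTo ((SP.mem_cellsF lam).mp c.2)
      have := this.2
      omega⟩, fun v => S.sign v.val)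
  have hF : Function.Injective F := by
    intro S S' h
    have h1 := congrArg Prod.fst h
    have h2 := congrArg Prod.snd h
    apply ext_sg
    · funext c
      by_cases hc : c ∈ lam.cells
      · have := congrFun h1 ⟨c, (SP.mem_cellsF lam).mpr hc⟩
        simpa [F, Fin.mk.injEq] using this
      · rw [S.zero_outside c hc, S'.zero_outside c hc]
    · funext v
      by_cases hv : v ∈ Set.Icc 1 n
      · have hvn : v < n + 1 := by
          have := hv.2; omega
        have := congrFun h2 ⟨v, hvn⟩
        simpa [F] using this
      · rw [S.sign_outside v hv, S'.sign_outside v hv]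
  exact Finite.of_injective F hF

lemma entry_mem {S : SignedShSYT lam} {c : ℕ × ℕ} (hc : c ∈ lam.cells) :
    1 ≤ S.entry c ∧ S.entry c ≤ n := S.bijOn.mapsTo hc

/-- The canonical cell containing value `v`. -/
def cA (S : SignedShSYT lam) (v : ℕ) : ℕ × ℕ :=
  Classical.epsilon fun c => c ∈ lam.cells ∧ S.entry c = v

lemma cA_spec (S : SignedShSYT lam) {v : ℕ} (h1 : 1 ≤ v) (h2 : v ≤ n) :
    cA S v ∈ lam.cells ∧ S.entry (cA S v) = v := by
  apply Classical.epsilon_spec (p := fun c => c ∈ lam.cells ∧ S.entry c = v)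
  obtain ⟨c, hc, he⟩ := S.bijOn.surjOn (show v ∈ Set.Icc 1 n from ⟨h1, h2⟩)
  exact ⟨c, hc, he⟩

lemma cA_unique (S : SignedShSYT lam) {v : ℕ} {c : ℕ × ℕ} (hc : c ∈ lam.cells)
    (he : S.entry c = v) : c = cA S v := by
  have h1 : 1 ≤ v := by have := entry_mem (S := S) hc; omega
  have h2 : v ≤ n := by have := entry_mem (S := S) hc; omega
  have := cA_spec S h1 h2
  exact S.bijOn.injOn hc this.1 (by rw [he, this.2])

lemma not_des_facts (S : SignedShSYT lam) {v : ℕ} (hv1 : 1 ≤ v) (hv2 : v + 1 ≤ n)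
    (hnd : v ∉ S.Des) :
    (S.sign v = false → (cA S (v+1)).1 ≤ (cA S v).1) ∧
    (S.sign (v+1) = true → (cA S v).1 < (cA S (v+1)).1) := by
  have h1 := cA_spec S hv1 (by omega)
  have h2 := cA_spec S (v := v+1) (by omega) hv2
  rw [SignedShSYT.Des, Set.mem_setOf_eq] at hnd
  push_neg at hnd
  exact hnd (cA S v) h1.1 (cA S (v+1)) h2.1 h1.2 h2.2

section Block

variable {S : SignedShSYT lam} {f : Fin n → ℕ}

/-- `f` extended to values `1, …, n`. -/
def fN (f : Fin n → ℕ) (v : ℕ) : ℕ := if h : v - 1 < n then f ⟨v - 1, h⟩ else 0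

lemma fN_mono (hf : Monotone f) {u v : ℕ} (h1 : 1 ≤ u) (h2 : u ≤ v) (h3 : v ≤ n) :
    fN f u ≤ fN f v := by
  rw [fN, fN, dif_pos (show u - 1 < n by omega), dif_pos (show v - 1 < n by omega)]
  exact hf (by simp [Fin.le_def]; omega)

variable (hdes : ∀ (j : ℕ) (h : j + 1 < n),
    f ⟨j, Nat.lt_of_succ_lt h⟩ = f ⟨j + 1, h⟩ → (j + 1) ∉ S.Des)

include hdes in
lemma not_des_of_fN {v : ℕ} (h1 : 1 ≤ v) (h2 : v + 1 ≤ n) (he : fN f v = fN f (v+1)) :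
    v ∉ S.Des := by
  obtain ⟨w, rfl⟩ : ∃ w, v = w + 1 := ⟨v - 1, by omega⟩
  rw [fN, fN, dif_pos (show w + 1 - 1 < n by omega),
    dif_pos (show w + 1 + 1 - 1 < n by omega)] at he
  apply hdes w (by omega)
  exact (congrArg f (Fin.mk_eq_mk.mpr (by omega : w = w + 1 - 1))).trans
    (he.trans (congrArg f (Fin.mk_eq_mk.mpr (by omega : w + 1 + 1 - 1 = w + 1))))

include hdes in
lemma block_step {u : ℕ} (h1 : 1 ≤ u) (h2 : u + 1 ≤ n) (he : fN f u = fN f (u+1)) :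
    (S.sign (u+1) = true → (cA S u).1 < (cA S (u+1)).1) ∧
    (S.sign u = false → S.sign (u+1) = false ∧ (cA S (u+1)).1 ≤ (cA S u).1) := by
  have hnd := not_des_of_fN hdes h1 h2 he
  have hfacts := not_des_facts S h1 h2 hnd
  refine ⟨hfacts.2, fun hs => ?_⟩
  have hle := hfacts.1 hs
  constructor
  · by_contra ht
    rw [Bool.not_eq_false] at ht
    have := hfacts.2 ht
    omega
  · exact hle

include hdes in
lemma block_sign (hf : Monotone f) {u d : ℕ} (h1 : 1 ≤ u) (h2 : u + d ≤ n)
    (he : fN f u = fN f (u + d)) (hs : S.sign u = false) :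
    S.sign (u + d) = false ∧ (cA S (u + d)).1 ≤ (cA S u).1 := by
  induction d with
  | zero => exact ⟨hs, le_rfl⟩
  | succ d ih =>
    have hmid : fN f u = fN f (u + d) := by
      have ha := fN_mono hf h1 (by omega) (by omega : u + d ≤ n)
      have hb := fN_mono hf (show 1 ≤ u + d by omega) (by omega) (show u + d + 1 ≤ n by omega)
      have : u + d + 1 = u + (d+1) := by omega
      rw [this] at hb
      omega
    obtain ⟨hsd, hrd⟩ := ih (by omega) hmid
    have hee : fN f (u + d) = fN f (u + d + 1) := by
      have : u + (d + 1) = u + d + 1 := by omega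
      rw [this] at he
      omega
    have := (block_step hdes (show 1 ≤ u + d by omega) (show u + d + 1 ≤ n by omega) hee).2 hsd
    have huds : u + (d+1) = u + d + 1 := by omega
    rw [huds]
    exact ⟨this.1, le_trans this.2 hrd⟩

include hdes in
lemma block_primed (hf : Monotone f) {u d : ℕ} (h1 : 1 ≤ u) (h2 : u + d ≤ n) (hd : 1 ≤ d)
    (he : fN f u = fN f (u + d)) (hs : S.sign (u + d) = true) :
    S.sign u = true ∧ (cA S u).1 < (cA S (u + d)).1 := by
  induction d with
  | zero => omega
  | succ d ih =>
    have hmid : fN f u = fN f (u + d) := by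
      have ha := fN_mono hf h1 (by omega) (by omega : u + d ≤ n)
      have hb := fN_mono hf (show 1 ≤ u + d by omega) (by omega) (show u + d + 1 ≤ n by omega)
      have : u + d + 1 = u + (d+1) := by omega
      rw [this] at hb
      omega
    have hee : fN f (u + d) = fN f (u + d + 1) := by
      have : u + (d + 1) = u + d + 1 := by omega
      rw [this] at he
      omega
    have hstep := block_step hdes (show 1 ≤ u + d by omega) (show u + d + 1 ≤ n by omega) hee
    have hsd : S.sign (u + d) = true := by
      by_contra hq
      rw [Bool.not_eq_true] at hq
      have := (hstep.2 hq).1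
      have huds : u + (d+1) = u + d + 1 := by omega
      rw [huds] at hs
      rw [hs] at this
      exact absurd this (by simp)
    have hrr : (cA S (u+d)).1 < (cA S (u+d+1)).1 := hstep.1 (by
      have huds : u + (d+1) = u + d + 1 := by omega
      rwa [huds] at hs)
    rcases Nat.eq_zero_or_pos d with rfl | hdpos
    · exact ⟨hsd, hrr⟩
    · obtain ⟨hu, hr⟩ := ih (by omega) hdpos hmid hsd
      have huds : u + (d+1) = u + d + 1 := by omega
      rw [huds]
      exact ⟨hu, by omega⟩

end Block

end SG

/-! ### The standardization bijection -/

section Main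

variable {n : ℕ} {lam : StrictPartition n}

/-- The witness predicate of `fundF n (S.Des) e`. -/
def Wit (e : ℕ →₀ ℕ) (S : SignedShSYT lam) (f : Fin n → ℕ) : Prop :=
  Monotone f ∧
    (∀ (j : ℕ) (h : j + 1 < n), f ⟨j, Nat.lt_of_succ_lt h⟩ = f ⟨j + 1, h⟩ → (j + 1) ∉ S.Des) ∧
    (∀ k : ℕ, e k = (Finset.univ.filter (fun p : Fin n => f p = k)).card)

lemma fundF_eq_wit (e : ℕ →₀ ℕ) (S : SignedShSYT lam) :
    fundF n S.Des e = if ∃ f, Wit e S f then 1 else 0 := rfl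

def mkEntry (S : SignedShSYT lam) (f : Fin n → ℕ) (c : ℕ × ℕ) : ℕ :=
  if _ : c ∈ lam.cells then
    2 * SG.fN f (S.entry c) + (if S.sign (S.entry c) then 1 else 2)
  else 0

variable {e : ℕ →₀ ℕ} {S : SignedShSYT lam} {f : Fin n → ℕ}

lemma mkEntry_mem {c : ℕ × ℕ} (hc : c ∈ lam.cells) :
    mkEntry S f c = 2 * SG.fN f (S.entry c) + (if S.sign (S.entry c) then 1 else 2) :=
  dif_pos hc

lemma fN_eq {v : ℕ} (h1 : 1 ≤ v) (h2 : v ≤ n) : SG.fN f v = f ⟨v - 1, by omega⟩ :=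
  dif_pos (by omega)

lemma fN_block (hW : Wit e S f) {u v : ℕ} (h1 : 1 ≤ u) (h2 : u ≤ v) (h3 : v ≤ n)
    (he : SG.fN f u = SG.fN f v) : SG.fN f u = SG.fN f (u + (v - u)) := by
  rw [show u + (v - u) = v by omega]
  exact he

lemma sign_if_cases {b : Bool} : (1 ≤ (if b then 1 else 2) ∧ (if b then 1 else 2) ≤ 2)
    ∧ (b = true → (if b then (1:ℕ) else 2) = 1) ∧ (b = false → (if b then (1:ℕ) else 2) = 2) := by
  cases b <;> simp

lemma mkEntry_mono (hW : Wit e S f) {c c' : ℕ × ℕ} (hc : c ∈ lam.cells) (hc' : c' ∈ lam.cells)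
    (hlt : S.entry c < S.entry c') : mkEntry S f c ≤ mkEntry S f c' := by
  have hu := SG.entry_mem (S := S) hc
  have hv := SG.entry_mem (S := S) hc'
  have hf : SG.fN f (S.entry c) ≤ SG.fN f (S.entry c') := SG.fN_mono hW.1 hu.1 hlt.le hv.2
  rw [mkEntry_mem hc, mkEntry_mem hc']
  rcases eq_or_lt_of_le hf with heq | hflt
  · by_cases hsu : S.sign (S.entry c) = true
    · rw [if_pos hsu]
      have := (sign_if_cases (b := S.sign (S.entry c'))).1
      omega
    · rw [Bool.not_eq_true] at hsu
      have hbs := SG.block_sign (S := S) hW.2.1 hW.1 (u := S.entry c) (d := S.entry c' - S.entry c)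
        hu.1 (by omega) (fN_block hW hu.1 hlt.le hv.2 heq) hsu
      rw [show S.entry c + (S.entry c' - S.entry c) = S.entry c' by omega] at hbs
      rw [if_neg (by simp [hsu]), if_neg (by simp [hbs.1])]
      omega
  · have h1 := (sign_if_cases (b := S.sign (S.entry c))).1
    have h2 := (sign_if_cases (b := S.sign (S.entry c'))).1
    omega

/-- Helper for `row_primed`: two equal odd codes in one row are impossible for distinct cells. -/
lemma mk_primed_aux (hW : Wit e S f) {r j j' : ℕ} (hc : (r, j) ∈ lam.cells)
    (hc' : (r, j') ∈ lam.cells) (hj : j < j')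
    (he : mkEntry S f (r, j) = mkEntry S f (r, j'))
    (hod : mkEntry S f (r, j) % 2 = 1) : False := by
  have hu := SG.entry_mem (S := S) hc
  have hv := SG.entry_mem (S := S) hc'
  have hlt := S.row_inc r j j' hc hc' hj
  rw [mkEntry_mem hc] at he hod
  rw [mkEntry_mem hc'] at he
  have c1 := sign_if_cases (b := S.sign (S.entry (r, j)))
  have c2 := sign_if_cases (b := S.sign (S.entry (r, j')))
  have hsu : S.sign (S.entry (r, j)) = true := by
    by_contra h
    rw [Bool.not_eq_true] at h
    rw [c1.2.2 h] at hod
    omega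
  have hsv : S.sign (S.entry (r, j')) = true := by
    by_contra h
    rw [Bool.not_eq_true] at h
    rw [c1.2.1 hsu, c2.2.2 h] at he
    omega
  have hfeq : SG.fN f (S.entry (r, j)) = SG.fN f (S.entry (r, j')) := by
    rw [c1.2.1 hsu, c2.2.1 hsv] at he
    omega
  have hbp := SG.block_primed (S := S) hW.2.1 hW.1 (u := S.entry (r, j))
    (d := S.entry (r, j') - S.entry (r, j)) hu.1 (by omega) (by omega)
    (fN_block hW hu.1 hlt.le hv.2 hfeq)
    (by rw [show S.entry (r, j) + (S.entry (r, j') - S.entry (r, j)) = S.entry (r, j') by omega]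
        exact hsv)
  rw [show S.entry (r, j) + (S.entry (r, j') - S.entry (r, j)) = S.entry (r, j') by omega] at hbp
  have e1 : (r, j) = SG.cA S (S.entry (r, j)) := SG.cA_unique S hc rfl
  have e2 : (r, j') = SG.cA S (S.entry (r, j')) := SG.cA_unique S hc' rfl
  have := hbp.2
  rw [← e1, ← e2] at this
  simp only at this
  omega

/-- Helper for `col_unprimed`. -/
lemma mk_unprimed_aux (hW : Wit e S f) {r r' j : ℕ} (hc : (r, j) ∈ lam.cells)
    (hc' : (r', j) ∈ lam.cells) (hr : r < r')
    (he : mkEntry S f (r, j) = mkEntry S f (r', j))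
    (hev : mkEntry S f (r, j) % 2 = 0) : False := by
  have hu := SG.entry_mem (S := S) hc
  have hv := SG.entry_mem (S := S) hc'
  have hlt := S.col_inc r r' j hc hc' hr
  rw [mkEntry_mem hc] at he hev
  rw [mkEntry_mem hc'] at he
  have c1 := sign_if_cases (b := S.sign (S.entry (r, j)))
  have c2 := sign_if_cases (b := S.sign (S.entry (r', j)))
  have hsu : S.sign (S.entry (r, j)) = false := by
    by_contra h
    rw [Bool.not_eq_false] at h
    rw [c1.2.1 h] at hev
    omega
  have hfeq : SG.fN f (S.entry (r, j)) = SG.fN f (S.entry (r', j)) := by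
    have h2 := c2.1
    rw [c1.2.2 hsu] at he
    have hmono := SG.fN_mono (f := f) hW.1 hu.1 hlt.le hv.2
    omega
  have hbs := SG.block_sign (S := S) hW.2.1 hW.1 (u := S.entry (r, j))
    (d := S.entry (r', j) - S.entry (r, j)) hu.1 (by omega)
    (fN_block hW hu.1 hlt.le hv.2 hfeq) hsu
  rw [show S.entry (r, j) + (S.entry (r', j) - S.entry (r, j)) = S.entry (r', j) by omega] at hbs
  have e1 : (r, j) = SG.cA S (S.entry (r, j)) := SG.cA_unique S hc rfl
  have e2 : (r', j) = SG.cA S (S.entry (r', j)) := SG.cA_unique S hc' rfl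
  have := hbs.2
  rw [← e1, ← e2] at this
  simp only at this
  omega

/-- The semistandard shifted tableau obtained from a signed standard one and a
compatible weakly increasing sequence. -/
def mkT (S : SignedShSYT lam) (f : Fin n → ℕ) (hW : Wit e S f) : ShSSYT lam where
  entry := mkEntry S f
  zero_outside := fun c hc => dif_neg hc
  entry_pos := fun c hc => by
    rw [mkEntry_mem hc]
    have := (sign_if_cases (b := S.sign (S.entry c))).1
    omega
  row_weak := fun r j j' hc hc' hj => by
    rcases eq_or_lt_of_le hj with rfl | hj'
    · exact le_rfl
    · exact mkEntry_mono hW hc hc' (S.row_inc r j j' hc hc' hj')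
  col_weak := fun r r' j hc hc' hr => by
    rcases eq_or_lt_of_le hr with rfl | hr'
    · exact le_rfl
    · exact mkEntry_mono hW hc hc' (S.col_inc r r' j hc hc' hr')
  row_primed := fun r j j' hc hc' he hod => by
    by_contra hne
    rcases lt_trichotomy j j' with h | h | h
    · exact mk_primed_aux hW hc hc' h he hod
    · exact hne h
    · exact mk_primed_aux hW hc' hc h he.symm (he ▸ hod)
  col_unprimed := fun r r' j hc hc' he hev => by
    by_contra hne
    rcases lt_trichotomy r r' with h | h | h
    · exact mk_unprimed_aux hW hc hc' h he hev
    · exact hne h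
    · exact mk_unprimed_aux hW hc' hc h he.symm (he ▸ hev)

lemma mkT_entry (hW : Wit e S f) : (mkT S f hW).entry = mkEntry S f := rfl

lemma mkVal (hW : Wit e S f) {c : ℕ × ℕ} (hc : c ∈ lam.cells) :
    (mkEntry S f c - 1) / 2 = SG.fN f (S.entry c) := by
  rw [mkEntry_mem hc]
  rcases (sign_if_cases (b := S.sign (S.entry c))).1 with ⟨h1, h2⟩
  omega

lemma content_card (hW : Wit e S f) (k : ℕ) :
    Nat.card {c : ℕ × ℕ // c ∈ lam.cells ∧ (mkEntry S f c - 1) / 2 = k} = e k := by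
  classical
  have E : {c : ℕ × ℕ // c ∈ lam.cells ∧ (mkEntry S f c - 1) / 2 = k} ≃
      {p : Fin n // f p = k} := by
    refine ⟨fun c => ⟨⟨S.entry c.val - 1, by
        have := SG.entry_mem (S := S) c.prop.1; omega⟩, ?_⟩,
      fun p => ⟨SG.cA S (p.val + 1), ?_, ?_⟩, ?_, ?_⟩
    · have h1 := SG.entry_mem (S := S) c.prop.1
      have h2 := c.prop.2
      rw [mkVal hW c.prop.1, fN_eq h1.1 h1.2] at h2
      exact h2
    · exact (SG.cA_spec S (by omega) (by omega : (p : ℕ) + 1 ≤ n)).1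
    · have hs := SG.cA_spec S (by omega) (by omega : (p : ℕ) + 1 ≤ n)
      rw [mkVal hW hs.1, hs.2, fN_eq (by omega) (by omega)]
      have hfin : (⟨(p : ℕ) + 1 - 1, by omega⟩ : Fin n) = p.val :=
        Fin.val_injective (show (p : ℕ) + 1 - 1 = ((p.val : Fin n) : ℕ) by omega)
      rw [hfin]
      exact p.prop
    · intro c
      apply Subtype.ext
      have h1 := SG.entry_mem (S := S) c.prop.1
      simp only
      rw [show S.entry c.val - 1 + 1 = S.entry c.val by omega]
      exact (SG.cA_unique S c.prop.1 rfl).symm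
    · intro p
      apply Subtype.ext
      apply Fin.ext
      simp only
      rw [(SG.cA_spec S (by omega) (by omega : (p : ℕ) + 1 ≤ n)).2]
      omega
  rw [Nat.card_congr E, Nat.card_eq_fintype_card, Fintype.card_subtype]
  exact (hW.2.2 k).symm

end Main

section Main2

variable {n : ℕ} {lam : StrictPartition n} {e : ℕ →₀ ℕ} {S : SignedShSYT lam} {f : Fin n → ℕ}

lemma keyT_lt_iff (Tt : ShSSYT lam) (c c' : ℕ × ℕ) :
    T.keyT Tt c < T.keyT Tt c' ↔ Tt.entry c < Tt.entry c' ∨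
      (Tt.entry c = Tt.entry c' ∧
        ((if Tt.entry c % 2 = 1 then c.1 else c.2) <
          if Tt.entry c' % 2 = 1 then c'.1 else c'.2)) := by
  rw [T.keyT, T.keyT]
  exact Prod.Lex.lt_iff

/-- Labels are compatible with the standardization key of `mkT`. -/
lemma lab_key_compat (hW : Wit e S f) {c c' : ℕ × ℕ} (hc : c ∈ lam.cells) (hc' : c' ∈ lam.cells)
    (hlt : S.entry c < S.entry c') : T.keyT (mkT S f hW) c < T.keyT (mkT S f hW) c' := by
  obtain ⟨r1, j1⟩ := c
  obtain ⟨r2, j2⟩ := c'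
  have hu := SG.entry_mem (S := S) hc
  have hv := SG.entry_mem (S := S) hc'
  have hf : SG.fN f (S.entry (r1, j1)) ≤ SG.fN f (S.entry (r2, j2)) :=
    SG.fN_mono hW.1 hu.1 hlt.le hv.2
  have c1 := sign_if_cases (b := S.sign (S.entry (r1, j1)))
  have c2 := sign_if_cases (b := S.sign (S.entry (r2, j2)))
  rw [keyT_lt_iff]
  have hEc : (mkT S f hW).entry (r1, j1)
      = 2 * SG.fN f (S.entry (r1, j1)) + (if S.sign (S.entry (r1, j1)) then 1 else 2) :=
    mkEntry_mem hc
  have hEc' : (mkT S f hW).entry (r2, j2)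
      = 2 * SG.fN f (S.entry (r2, j2)) + (if S.sign (S.entry (r2, j2)) then 1 else 2) :=
    mkEntry_mem hc'
  rcases eq_or_lt_of_le hf with heq | hflt
  · by_cases hsu : S.sign (S.entry (r1, j1)) = true
    · by_cases hsv : S.sign (S.entry (r2, j2)) = true
      · -- both primed: equal codes, rows strictly increase
        right
        have hbp := SG.block_primed (S := S) hW.2.1 hW.1 (u := S.entry (r1, j1))
          (d := S.entry (r2, j2) - S.entry (r1, j1)) hu.1 (by omega) (by omega)
          (fN_block hW hu.1 hlt.le hv.2 heq)
          (by rw [show S.entry (r1, j1) + (S.entry (r2, j2) - S.entry (r1, j1))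
                = S.entry (r2, j2) by omega]
              exact hsv)
        rw [show S.entry (r1, j1) + (S.entry (r2, j2) - S.entry (r1, j1))
          = S.entry (r2, j2) by omega] at hbp
        have e1 : ((r1, j1) : ℕ × ℕ) = SG.cA S (S.entry (r1, j1)) := SG.cA_unique S hc rfl
        have e2 : ((r2, j2) : ℕ × ℕ) = SG.cA S (S.entry (r2, j2)) := SG.cA_unique S hc' rfl
        have hrows : r1 < r2 := by
          have h2 := hbp.2
          rw [← e1, ← e2] at h2
          exact h2
        rw [hEc, hEc', c1.2.1 hsu, c2.2.1 hsv]
        refine ⟨by omega, ?_⟩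
        rw [if_pos (by omega), if_pos (by omega)]
        exact hrows
      · -- u primed, v unprimed
        left
        rw [hEc, hEc', c1.2.1 hsu, c2.2.2 (Bool.not_eq_true _ ▸ hsv)]
        omega
    · -- u unprimed: v unprimed too
      have hsu' : S.sign (S.entry (r1, j1)) = false := Bool.not_eq_true _ ▸ hsu
      have hbs := SG.block_sign (S := S) hW.2.1 hW.1 (u := S.entry (r1, j1))
        (d := S.entry (r2, j2) - S.entry (r1, j1)) hu.1 (by omega)
        (fN_block hW hu.1 hlt.le hv.2 heq) hsu'
      rw [show S.entry (r1, j1) + (S.entry (r2, j2) - S.entry (r1, j1))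
        = S.entry (r2, j2) by omega] at hbs
      have e1 : ((r1, j1) : ℕ × ℕ) = SG.cA S (S.entry (r1, j1)) := SG.cA_unique S hc rfl
      have e2 : ((r2, j2) : ℕ × ℕ) = SG.cA S (S.entry (r2, j2)) := SG.cA_unique S hc' rfl
      have hrows : r2 ≤ r1 := by
        have h2 := hbs.2
        rw [← e1, ← e2] at h2
        exact h2
      right
      rw [hEc, hEc', c1.2.2 hsu', c2.2.2 hbs.1]
      refine ⟨by omega, ?_⟩
      rw [if_neg (by omega), if_neg (by omega)]
      -- goal : j1 < j2
      rcases eq_or_lt_of_le hrows with hre | hrl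
      · -- same row
        subst hre
        rcases lt_trichotomy j1 j2 with hj | hj | hj
        · exact hj
        · subst hj
          exact absurd rfl (ne_of_lt hlt)
        · exact absurd (S.row_inc r2 j2 j1 hc' hc hj) (by omega)
      · -- r2 < r1 : use the strip lemma on mkT
        have hmk : (mkT S f hW).entry (r2, j2) = (mkT S f hW).entry (r1, j1) := by
          rw [hEc, hEc', c1.2.2 hsu', c2.2.2 hbs.1]
          omega
        have hev : (mkT S f hW).entry (r2, j2) % 2 = 0 := by
          rw [hEc', c2.2.2 hbs.1]
          omega
        exact T.strip (mkT S f hW) hc' hc hmk hev hrl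
  · left
    rw [hEc, hEc']
    omega

lemma lab_key_iff (hW : Wit e S f) {c c' : ℕ × ℕ} (hc : c ∈ lam.cells) (hc' : c' ∈ lam.cells) :
    S.entry c < S.entry c' ↔ T.keyT (mkT S f hW) c < T.keyT (mkT S f hW) c' := by
  constructor
  · exact lab_key_compat hW hc hc'
  · intro hk
    rcases lt_trichotomy (S.entry c) (S.entry c') with h | h | h
    · exact h
    · have hcc : c = c' := S.bijOn.injOn hc hc' h
      subst hcc
      exact absurd hk (lt_irrefl _)
    · exact absurd hk (asymm (lab_key_compat hW hc' hc h))

variable (lam e) in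
/-- The domain of `Φ`. -/
abbrev Btype : Type :=
  Σ St : {St : SignedShSYT lam // ∀ j : ℕ, (j, j) ∈ lam.cells → St.sign (St.entry (j, j)) = false},
    {f : Fin n → ℕ // Wit e St.val f}

variable (lam e) in
/-- The codomain of `Φ`. -/
abbrev Atype : Type :=
  {T : ShSSYT lam // (∀ j : ℕ, (j, j) ∈ lam.cells → T.entry (j, j) % 2 = 0) ∧
    (∀ k : ℕ, Nat.card {c : ℕ × ℕ // c ∈ lam.cells ∧ (T.entry c - 1) / 2 = k} = e k)}

variable (lam e) in
/-- The standardization bijection. -/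
def Phi : Btype lam e → Atype lam e := fun b =>
  ⟨mkT b.fst.val b.snd.val b.snd.prop, by
    constructor
    · intro j hj
      have h := (sign_if_cases (b := b.fst.val.sign (b.fst.val.entry (j, j)))).2.2
        (b.fst.prop j hj)
      rw [mkT_entry, mkEntry_mem hj, h]
      omega
    · intro k
      exact content_card b.snd.prop k⟩

lemma Phi_inj : Function.Injective (Phi lam e) := by
  rintro ⟨⟨S1, hS1⟩, f1, hf1⟩ ⟨⟨S2, hS2⟩, f2, hf2⟩ h
  have hTT : mkT S1 f1 hf1 = mkT S2 f2 hf2 := congrArg Subtype.val h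
  have hE : mkEntry S1 f1 = mkEntry S2 f2 := congrArg ShSSYT.entry hTT
  have hff : f1 = f2 := monotone_unique hf1.1 hf2.1
    (fun k => (hf1.2.2 k).symm.trans (hf2.2.2 k))
  subst hff
  have hent : S1.entry = S2.entry := by
    funext c
    by_cases hc : c ∈ lam.cells
    · have hbij1 : Set.BijOn S1.entry ↑(SP.cellsF lam) (Set.Icc 1 (SP.cellsF lam).card) := by
        rw [SP.coe_cellsF, SP.card_cellsF]
        exact S1.bijOn
      have hbij2 : Set.BijOn S2.entry ↑(SP.cellsF lam) (Set.Icc 1 (SP.cellsF lam).card) := by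
        rw [SP.coe_cellsF, SP.card_cellsF]
        exact S2.bijOn
      have r1 := rank_eq_of_bijOn hbij1 (fun a ha b hb =>
        lab_key_iff hf1 ((SP.mem_cellsF lam).mp ha) ((SP.mem_cellsF lam).mp hb))
        ((SP.mem_cellsF lam).mpr hc)
      have r2 := rank_eq_of_bijOn hbij2 (fun a ha b hb =>
        lab_key_iff hf2 ((SP.mem_cellsF lam).mp ha) ((SP.mem_cellsF lam).mp hb))
        ((SP.mem_cellsF lam).mpr hc)
      rw [hTT] at r1
      exact r1.trans r2.symm
    · rw [S1.zero_outside c hc, S2.zero_outside c hc]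
  have hsg : S1.sign = S2.sign := by
    funext v
    by_cases hv : v ∈ Set.Icc 1 n
    · have hspec := SG.cA_spec S1 hv.1 hv.2
      have h1 : mkEntry S1 f1 (SG.cA S1 v) = mkEntry S2 f1 (SG.cA S1 v) := congrFun hE _
      have he2 : S2.entry (SG.cA S1 v) = v := by rw [← hent]; exact hspec.2
      rw [mkEntry_mem (S := S1) hspec.1, mkEntry_mem (S := S2) hspec.1, hspec.2, he2] at h1
      have c1 := sign_if_cases (b := S1.sign v)
      have c2 := sign_if_cases (b := S2.sign v)
      cases hb1 : S1.sign v <;> cases hb2 : S2.sign v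
      · rfl
      · rw [c1.2.2 hb1, c2.2.1 hb2] at h1
        omega
      · rw [c1.2.1 hb1, c2.2.2 hb2] at h1
        omega
      · rfl
    · rw [S1.sign_outside v hv, S2.sign_outside v hv]
  have hSS : S1 = S2 := SG.ext_sg hent hsg
  subst hSS
  rfl

end Main2

section Main3

variable {n : ℕ} {lam : StrictPartition n} {e : ℕ →₀ ℕ}

def Kimg (Tt : ShSSYT lam) : Finset (ℕ ×ₗ ℕ) := (SP.cellsF lam).image (T.keyT Tt)

lemma card_Kimg (Tt : ShSSYT lam) : (Kimg Tt).card = n := by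
  rw [Kimg, Finset.card_image_of_injOn, SP.card_cellsF]
  intro a ha b hb h
  exact T.keyT_injOn Tt ((SP.mem_cellsF lam).mp ha) ((SP.mem_cellsF lam).mp hb) h

def oiso (Tt : ShSSYT lam) : Fin n ≃o {x // x ∈ Kimg Tt} :=
  (Kimg Tt).orderIsoOfFin (card_Kimg Tt)

def labT (Tt : ShSSYT lam) (c : ℕ × ℕ) : ℕ :=
  if h : c ∈ SP.cellsF lam then
    ((oiso Tt).symm ⟨T.keyT Tt c, Finset.mem_image_of_mem _ h⟩ : Fin n) + 1
  else 0

def cellIn (Tt : ShSSYT lam) (p : Fin n) : ℕ × ℕ :=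
  (Finset.mem_image.mp (oiso Tt p).2).choose

lemma cellIn_spec (Tt : ShSSYT lam) (p : Fin n) :
    cellIn Tt p ∈ SP.cellsF lam ∧ T.keyT Tt (cellIn Tt p) = ((oiso Tt) p).val := by
  have h := (Finset.mem_image.mp (oiso Tt p).2).choose_spec
  exact ⟨h.1, h.2⟩

lemma labT_cellIn (Tt : ShSSYT lam) (p : Fin n) : labT Tt (cellIn Tt p) = (p : ℕ) + 1 := by
  rw [labT, dif_pos (cellIn_spec Tt p).1]
  have hsub : (⟨T.keyT Tt (cellIn Tt p), Finset.mem_image_of_mem _ (cellIn_spec Tt p).1⟩ :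
      {x // x ∈ Kimg Tt}) = oiso Tt p := Subtype.ext (cellIn_spec Tt p).2
  rw [hsub, OrderIso.symm_apply_apply]

lemma labT_lt_iff (Tt : ShSSYT lam) {c c' : ℕ × ℕ} (hc : c ∈ SP.cellsF lam)
    (hc' : c' ∈ SP.cellsF lam) :
    labT Tt c < labT Tt c' ↔ T.keyT Tt c < T.keyT Tt c' := by
  rw [labT, labT, dif_pos hc, dif_pos hc']
  have h1 : ((oiso Tt).symm ⟨T.keyT Tt c, Finset.mem_image_of_mem _ hc⟩ <
      (oiso Tt).symm ⟨T.keyT Tt c', Finset.mem_image_of_mem _ hc'⟩) ↔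
      T.keyT Tt c < T.keyT Tt c' := by
    rw [OrderIso.lt_iff_lt]
    exact Subtype.mk_lt_mk
  rw [← h1, Fin.lt_def]
  omega

lemma labT_mem_Icc (Tt : ShSSYT lam) {c : ℕ × ℕ} (hc : c ∈ SP.cellsF lam) :
    labT Tt c ∈ Set.Icc 1 n := by
  rw [labT, dif_pos hc]
  have := ((oiso Tt).symm ⟨T.keyT Tt c, Finset.mem_image_of_mem _ hc⟩).isLt
  exact ⟨by omega, by omega⟩

lemma cellIn_labT (Tt : ShSSYT lam) {c : ℕ × ℕ} (hc : c ∈ SP.cellsF lam)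
    (h : labT Tt c - 1 < n) : cellIn Tt ⟨labT Tt c - 1, h⟩ = c := by
  have hs := cellIn_spec Tt ⟨labT Tt c - 1, h⟩
  have hfin : (⟨labT Tt c - 1, h⟩ : Fin n)
      = (oiso Tt).symm ⟨T.keyT Tt c, Finset.mem_image_of_mem _ hc⟩ := by
    apply Fin.val_injective
    show labT Tt c - 1 = _
    rw [labT, dif_pos hc]
    omega
  have hk : T.keyT Tt (cellIn Tt ⟨labT Tt c - 1, h⟩) = T.keyT Tt c := by
    rw [hs.2, hfin]
    exact congrArg Subtype.val ((oiso Tt).apply_symm_apply _)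
  exact T.keyT_injOn Tt ((SP.mem_cellsF lam).mp hs.1) ((SP.mem_cellsF lam).mp hc) hk

def stdSign (Tt : ShSSYT lam) (v : ℕ) : Bool :=
  if h : v - 1 < n ∧ 1 ≤ v then decide (Tt.entry (cellIn Tt ⟨v - 1, h.1⟩) % 2 = 1) else false

def stdS (Tt : ShSSYT lam) : SignedShSYT lam where
  entry := labT Tt
  sign := stdSign Tt
  zero_outside := fun c hc => by
    rw [labT, dif_neg (fun h => hc ((SP.mem_cellsF lam).mp h))]
  sign_outside := fun v hv => by
    rw [stdSign, dif_neg]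
    rintro ⟨h1, h2⟩
    exact hv ⟨h2, by omega⟩
  bijOn := by
    refine ⟨?_, ?_, ?_⟩
    · intro c hc
      exact labT_mem_Icc Tt ((SP.mem_cellsF lam).mpr hc)
    · intro c hc c' hc' h
      have hcF := (SP.mem_cellsF lam).mpr hc
      have hc'F := (SP.mem_cellsF lam).mpr hc'
      by_contra hne
      have hkey : T.keyT Tt c ≠ T.keyT Tt c' := fun hk =>
        hne (T.keyT_injOn Tt ((SP.mem_cellsF lam).mp hcF) ((SP.mem_cellsF lam).mp hc'F) hk)
      rcases lt_or_gt_of_ne hkey with hk | hk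
      · have := (labT_lt_iff Tt hcF hc'F).mpr hk
        omega
      · have := (labT_lt_iff Tt hc'F hcF).mpr hk
        omega
    · intro v hv
      refine ⟨cellIn Tt ⟨v - 1, by have := hv.2; have := hv.1; omega⟩,
        (SP.mem_cellsF lam).mp (cellIn_spec Tt _).1, ?_⟩
      rw [labT_cellIn]
      show v - 1 + 1 = v
      have := hv.1
      omega
  row_inc := fun r j j' hc hc' hj => by
    have hk := T.keyT_lt_of_row Tt hc hc' hj
    rwa [← labT_lt_iff Tt ((SP.mem_cellsF lam).mpr hc) ((SP.mem_cellsF lam).mpr hc')] at hk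
  col_inc := fun r r' j hc hc' hr => by
    have hk := T.keyT_lt_of_col Tt hc hc' hr
    rwa [← labT_lt_iff Tt ((SP.mem_cellsF lam).mpr hc) ((SP.mem_cellsF lam).mpr hc')] at hk

def stdF (Tt : ShSSYT lam) (p : Fin n) : ℕ := (Tt.entry (cellIn Tt p) - 1) / 2

lemma stdF_mono (Tt : ShSSYT lam) : Monotone (stdF Tt) := by
  intro p q hpq
  have h1 : oiso Tt p ≤ oiso Tt q := (oiso Tt).monotone hpq
  have h2 : T.keyT Tt (cellIn Tt p) ≤ T.keyT Tt (cellIn Tt q) := by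
    rw [(cellIn_spec Tt p).2, (cellIn_spec Tt q).2]
    exact h1
  rw [T.keyT, T.keyT] at h2
  have h3 : Tt.entry (cellIn Tt p) ≤ Tt.entry (cellIn Tt q) := by
    rcases Prod.Lex.le_iff.mp h2 with h | h
    · exact le_of_lt h
    · exact le_of_eq h.1
  exact Nat.div_le_div_right (by omega)

lemma stdSign_eq (Tt : ShSSYT lam) {v : ℕ} (h1 : 1 ≤ v) (h2 : v ≤ n) {c : ℕ × ℕ}
    (hc : c ∈ SP.cellsF lam) (hlab : labT Tt c = v) :
    stdSign Tt v = decide (Tt.entry c % 2 = 1) := by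
  rw [stdSign, dif_pos (⟨by omega, h1⟩ : v - 1 < n ∧ 1 ≤ v)]
  have hid : cellIn Tt ⟨v - 1, by omega⟩ = c := by
    rw [show (⟨v - 1, by omega⟩ : Fin n) = ⟨labT Tt c - 1, by omega⟩ from
      Fin.mk_eq_mk.mpr (by omega)]
    exact cellIn_labT Tt hc (by omega)
  rw [hid]

lemma std_des (Tt : ShSSYT lam) : ∀ (j : ℕ) (h : j + 1 < n),
    stdF Tt ⟨j, Nat.lt_of_succ_lt h⟩ = stdF Tt ⟨j + 1, h⟩ → (j + 1) ∉ (stdS Tt).Des := by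
  intro j h heq hdes
  obtain ⟨c, hcm, c', hc'm, hec, hec', hcl⟩ := hdes
  have hcF := (SP.mem_cellsF lam).mpr hcm
  have hc'F := (SP.mem_cellsF lam).mpr hc'm
  have hlc : labT Tt c = j + 1 := hec
  have hlc' : labT Tt c' = j + 2 := hec'
  have hid : cellIn Tt ⟨j, Nat.lt_of_succ_lt h⟩ = c := by
    rw [show (⟨j, Nat.lt_of_succ_lt h⟩ : Fin n) = ⟨labT Tt c - 1, by omega⟩ from
      Fin.mk_eq_mk.mpr (by omega)]
    exact cellIn_labT Tt hcF (by omega)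
  have hid' : cellIn Tt ⟨j + 1, h⟩ = c' := by
    rw [show (⟨j + 1, h⟩ : Fin n) = ⟨labT Tt c' - 1, by omega⟩ from
      Fin.mk_eq_mk.mpr (by omega)]
    exact cellIn_labT Tt hc'F (by omega)
  rw [stdF, stdF, hid, hid'] at heq
  have hE1 : 1 ≤ Tt.entry c := Tt.entry_pos c hcm
  have hE1' : 1 ≤ Tt.entry c' := Tt.entry_pos c' hc'm
  have hkey : T.keyT Tt c < T.keyT Tt c' := by
    rw [← labT_lt_iff Tt hcF hc'F, hlc, hlc']
    omega
  rw [keyT_lt_iff] at hkey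
  have hs1 : (stdS Tt).sign (j + 1) = decide (Tt.entry c % 2 = 1) :=
    stdSign_eq Tt (by omega) (by omega) hcF hlc
  have hs2 : (stdS Tt).sign (j + 1 + 1) = decide (Tt.entry c' % 2 = 1) :=
    stdSign_eq Tt (by omega) (by omega) hc'F (by rw [hlc'])
  rcases Nat.mod_two_eq_zero_or_one (Tt.entry c) with hp | hp <;>
    rcases Nat.mod_two_eq_zero_or_one (Tt.entry c') with hp' | hp'
  · -- both even : entries equal
    have hee : Tt.entry c = Tt.entry c' := by omega
    rcases hkey with hk | ⟨hk1, hk2⟩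
    · omega
    · rw [if_neg (by omega), if_neg (by omega)] at hk2
      rcases hcl with ⟨_, hrow⟩ | ⟨hsg, _⟩
      · exact absurd (T.strip Tt hcm hc'm hee hp hrow) (by omega)
      · rw [hs2] at hsg
        simp only [decide_eq_true_eq] at hsg
        omega
  · -- c even, c' odd : entry c > entry c', contradiction with key order
    rcases hkey with hk | ⟨hk1, hk2⟩ <;> omega
  · -- c odd, c' even : no clause can hold
    rcases hcl with ⟨hsg, _⟩ | ⟨hsg, _⟩
    · rw [hs1] at hsg
      simp only [decide_eq_false_iff_not] at hsg
      omega
    · rw [hs2] at hsg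
      simp only [decide_eq_true_eq] at hsg
      omega
  · -- both odd : entries equal, rows strictly increase
    have hee : Tt.entry c = Tt.entry c' := by omega
    rcases hkey with hk | ⟨hk1, hk2⟩
    · omega
    · rw [if_pos (by omega), if_pos (by omega)] at hk2
      rcases hcl with ⟨hsg, _⟩ | ⟨_, hrow⟩
      · rw [hs1] at hsg
        simp only [decide_eq_false_iff_not] at hsg
        omega
      · omega

lemma std_content (Tt : ShSSYT lam)
    (hcont : ∀ k : ℕ, Nat.card {c : ℕ × ℕ // c ∈ lam.cells ∧ (Tt.entry c - 1) / 2 = k} = e k)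
    (k : ℕ) : e k = (Finset.univ.filter (fun p : Fin n => stdF Tt p = k)).card := by
  classical
  rw [← hcont k]
  have hmb : ∀ c : {c : ℕ × ℕ // c ∈ lam.cells ∧ (Tt.entry c - 1) / 2 = k},
      labT Tt c.val - 1 < n := by
    intro c
    have h := labT_mem_Icc Tt ((SP.mem_cellsF lam).mpr c.prop.1)
    have h1 := h.1
    have h2 := h.2
    omega
  have E : {c : ℕ × ℕ // c ∈ lam.cells ∧ (Tt.entry c - 1) / 2 = k} ≃
      {p : Fin n // stdF Tt p = k} := by
    refine ⟨fun c => ⟨⟨labT Tt c.val - 1, hmb c⟩, ?_⟩,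
      fun p => ⟨cellIn Tt p.val, (SP.mem_cellsF lam).mp (cellIn_spec Tt p.val).1, ?_⟩, ?_, ?_⟩
    · show (Tt.entry (cellIn Tt ⟨labT Tt c.val - 1, hmb c⟩) - 1) / 2 = k
      rw [cellIn_labT Tt ((SP.mem_cellsF lam).mpr c.prop.1) (hmb c)]
      exact c.prop.2
    · exact p.prop
    · intro c
      apply Subtype.ext
      exact cellIn_labT Tt ((SP.mem_cellsF lam).mpr c.prop.1) (hmb c)
    · intro p
      apply Subtype.ext
      apply Fin.val_injective
      show labT Tt (cellIn Tt p.val) - 1 = (p.val : ℕ)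
      rw [labT_cellIn]
      omega
  rw [Nat.card_congr E, Nat.card_eq_fintype_card, Fintype.card_subtype]

lemma std_diag (Tt : ShSSYT lam)
    (hdiag : ∀ j : ℕ, (j, j) ∈ lam.cells → Tt.entry (j, j) % 2 = 0) :
    ∀ j : ℕ, (j, j) ∈ lam.cells →
      (stdS Tt).sign ((stdS Tt).entry (j, j)) = false := by
  intro j hj
  have hcF := (SP.mem_cellsF lam).mpr hj
  have hIcc := labT_mem_Icc Tt hcF
  show stdSign Tt (labT Tt (j, j)) = false
  rw [stdSign_eq Tt hIcc.1 hIcc.2 hcF rfl]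
  simp only [decide_eq_false_iff_not]
  have := hdiag j hj
  omega

lemma Phi_surj : Function.Surjective (Phi lam e) := by
  rintro ⟨Tt, hdiag, hcont⟩
  refine ⟨⟨⟨stdS Tt, std_diag Tt hdiag⟩,
    ⟨stdF Tt, stdF_mono Tt, std_des Tt, std_content Tt hcont⟩⟩, ?_⟩
  apply Subtype.ext
  apply T.ext_entry
  funext c
  by_cases hc : c ∈ lam.cells
  · show mkEntry (stdS Tt) (stdF Tt) c = Tt.entry c
    rw [mkEntry_mem hc]
    have hcF := (SP.mem_cellsF lam).mpr hc
    have hIcc := labT_mem_Icc Tt hcF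
    show 2 * SG.fN (stdF Tt) (labT Tt c) + (if (stdS Tt).sign (labT Tt c) then 1 else 2)
      = Tt.entry c
    rw [fN_eq hIcc.1 hIcc.2]
    have hfv : stdF Tt ⟨labT Tt c - 1, by have := hIcc.1; have := hIcc.2; omega⟩
        = (Tt.entry c - 1) / 2 := by
      show (Tt.entry (cellIn Tt ⟨labT Tt c - 1, _⟩) - 1) / 2 = _
      rw [cellIn_labT Tt hcF]
    have hsv : (stdS Tt).sign (labT Tt c) = decide (Tt.entry c % 2 = 1) :=
      stdSign_eq Tt hIcc.1 hIcc.2 hcF rfl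
    rw [hfv, hsv]
    have hE1 : 1 ≤ Tt.entry c := Tt.entry_pos c hc
    rcases Nat.mod_two_eq_zero_or_one (Tt.entry c) with hp | hp
    · rw [decide_eq_false (by omega)]
      simp only [Bool.false_eq_true, if_false]
      omega
    · rw [decide_eq_true (by omega : Tt.entry c % 2 = 1)]
      simp only [if_true]
      omega
  · show mkEntry (stdS Tt) (stdF Tt) c = Tt.entry c
    rw [Tt.zero_outside c hc]
    exact dif_neg hc

end Main3

end SPF

end Aux

/-- For every strict partition `λ` of `n`, the Schur P-function
satisfies `P_λ = Σ_{S ∈ ShSYT^±(λ)} F_{Des(S)}`, summed over signed standard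
shifted tableaux of shape `λ` with no signed entries on the main diagonal. -/
theorem schurP_eq_sum_fund {n : ℕ} (lam : StrictPartition n) :
    schurP n lam =
      ∑ᶠ S : {S : SignedShSYT lam //
          ∀ j : ℕ, (j, j) ∈ lam.cells → S.sign (S.entry (j, j)) = false},
        fundF n (SignedShSYT.Des S.val) := by
  classical
  haveI : Finite (SignedShSYT lam) := SPF.SG.finite_sg
  haveI : Fintype {S : SignedShSYT lam //
      ∀ j : ℕ, (j, j) ∈ lam.cells → S.sign (S.entry (j, j)) = false} := Fintype.ofFinite _
  rw [finsum_eq_sum_of_fintype]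
  funext e
  rw [Finset.sum_apply]
  have hsub : ∀ St : {S : SignedShSYT lam //
      ∀ j : ℕ, (j, j) ∈ lam.cells → S.sign (S.entry (j, j)) = false},
      Subsingleton {f : Fin n → ℕ // SPF.Wit e St.val f} := by
    intro St
    constructor
    rintro ⟨f1, hf1⟩ ⟨f2, hf2⟩
    exact Subtype.ext (SPF.monotone_unique hf1.1 hf2.1
      (fun k => (hf1.2.2 k).symm.trans (hf2.2.2 k)))
  letI finst : ∀ St : {S : SignedShSYT lam //
      ∀ j : ℕ, (j, j) ∈ lam.cells → S.sign (S.entry (j, j)) = false},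
      Fintype {f : Fin n → ℕ // SPF.Wit e St.val f} :=
    fun St => @Fintype.ofFinite _ (@Finite.of_subsingleton _ (hsub St))
  have hfib : ∀ St : {S : SignedShSYT lam //
      ∀ j : ℕ, (j, j) ∈ lam.cells → S.sign (S.entry (j, j)) = false},
      fundF n (SignedShSYT.Des St.val) e
        = ((Nat.card {f : Fin n → ℕ // SPF.Wit e St.val f} : ℕ) : ℚ) := by
    intro St
    rw [SPF.fundF_eq_wit]
    by_cases hx : ∃ f, SPF.Wit e St.val f
    · rw [if_pos hx]
      haveI := hsub St
      haveI : Nonempty {f : Fin n → ℕ // SPF.Wit e St.val f} :=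
        ⟨⟨hx.choose, hx.choose_spec⟩⟩
      rw [Nat.card_unique]
      norm_num
    · rw [if_neg hx]
      haveI : IsEmpty {f : Fin n → ℕ // SPF.Wit e St.val f} :=
        ⟨fun f => hx ⟨f.val, f.prop⟩⟩
      rw [Nat.card_of_isEmpty]
      norm_num
  rw [Finset.sum_congr rfl (fun St _ => hfib St), ← Nat.cast_sum]
  have hA : schurP n lam e = ((Nat.card (SPF.Atype lam e) : ℕ) : ℚ) := rfl
  rw [hA]
  congr 1
  have hcardB : Nat.card (SPF.Atype lam e) = Nat.card (SPF.Btype lam e) :=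
    (Nat.card_congr (Equiv.ofBijective (SPF.Phi lam e)
      ⟨SPF.Phi_inj, SPF.Phi_surj⟩)).symm
  rw [hcardB, Nat.card_eq_fintype_card, Fintype.card_sigma]
  exact Finset.sum_congr rfl (fun St _ => Nat.card_eq_fintype_card.symm)
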